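/- Let H be an RKHS on an open set X ⊂ ℝⁿ with kernel k ∈ C¹(X × X), linearly independent kernel family, and let φ_t be the flow of ẋ = f(x) for a locally Lipschitz vector field f leaving X positively invariant. Suppose the Perron–Frobenius semigroup K_t k(x,·) := k(φ_t(x),·) extends to bounded operators on H with ‖K_t‖ ≤ e^{ωt} for all t ≥ 0 and some ω > 0. Then for all n ∈ ℕ, a₁,…,aₙ ∈ ℂ and x₁,…,xₙ ∈ X: Re ∑_{i,j=1}^n ∑_{l=1}^n aᵢ a̅ⱼ f_l(xᵢ) ∂_{x_l} k(xᵢ,xⱼ) ≤ ω ∑_{i,j=1}^n aᵢ a̅ⱼ k(xᵢ,xⱼ), where ∂_{x_l} denotes the partial derivative of k in the l-th coordinate of the first variable. -/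

import Mathlib

open scoped InnerProductSpace ComplexConjugate NNReal

open Finset

private lemma aux_deriv_nonneg {h : ℝ → ℝ} {D : ℝ} (hd : HasDerivAt h D 0)
    (h0 : h 0 = 0) (hpos : ∀ t > (0:ℝ), 0 ≤ h t) : 0 ≤ D := by
  have hs : Filter.Tendsto (slope h 0) (nhdsWithin 0 (Set.Ioi 0)) (nhds D) :=
    (hasDerivAt_iff_tendsto_slope.mp hd).mono_left
      (nhdsWithin_mono 0 (fun t ht => ne_of_gt ht))
  refine ge_of_tendsto hs ?_
  filter_upwards [self_mem_nhdsWithin] with t ht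
  have hts : slope h 0 t = t⁻¹ * h t := by
    simp [slope_def_field, h0, div_eq_inv_mul]
  rw [hts]
  exact mul_nonneg (inv_nonneg.mpr (le_of_lt ht)) (hpos t ht)

private lemma aux_single_decomp {n : ℕ} (v : EuclideanSpace ℝ (Fin n)) :
    v = ∑ l, v l • EuclideanSpace.single l 1 := by
  have := (EuclideanSpace.basisFun (Fin n) ℝ).sum_repr v
  simpa [EuclideanSpace.basisFun_apply, EuclideanSpace.basisFun_repr] using this.symm

theorem dissipativity_of_semigroup_bound
    {n : ℕ} {H : Type*}
    [NormedAddCommGroup H] [InnerProductSpace ℂ H] [CompleteSpace H]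
    (Ω : Set (EuclideanSpace ℝ (Fin n))) (hΩ : IsOpen Ω)
    (K : EuclideanSpace ℝ (Fin n) → H)
    (DK : EuclideanSpace ℝ (Fin n) → (EuclideanSpace ℝ (Fin n) →L[ℝ] H))
    (hC1 : ∀ x ∈ Ω, HasFDerivAt K (DK x) x)
    (hDKcont : ContinuousOn DK Ω)
    (hli : LinearIndependent ℂ (fun x : Ω => K x))
    (f : EuclideanSpace ℝ (Fin n) → EuclideanSpace ℝ (Fin n))
    (hf : LocallyLipschitz f)
    (φ : ℝ → EuclideanSpace ℝ (Fin n) → EuclideanSpace ℝ (Fin n))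
    (hφ0 : ∀ x ∈ Ω, φ 0 x = x)
    (hφinv : ∀ x ∈ Ω, ∀ t ≥ (0:ℝ), φ t x ∈ Ω)
    (hφode : ∀ x ∈ Ω, ∀ t ≥ (0:ℝ), HasDerivAt (fun s => φ s x) (f (φ t x)) t)
    (ω : ℝ) (hω : 0 < ω)
    (Kt : ℝ → (H →L[ℂ] H))
    (hKt : ∀ t ≥ (0:ℝ), ∀ x ∈ Ω, Kt t (K x) = K (φ t x))
    (hKtbound : ∀ t ≥ (0:ℝ), ‖Kt t‖ ≤ Real.exp (ω * t)) :
    ∀ (m : ℕ) (a : Fin m → ℂ) (x : Fin m → EuclideanSpace ℝ (Fin n)),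
      (∀ i, x i ∈ Ω) →
      (∑ i, ∑ j, a i * conj (a j) *
          ∑ l : Fin n, ((f (x i) l : ℝ) : ℂ) *
            ⟪K (x j), DK (x i) (EuclideanSpace.single l 1)⟫_ℂ).re ≤
        ω * (∑ i, ∑ j, a i * conj (a j) * ⟪K (x j), K (x i)⟫_ℂ).re := by
  intro m a x hx
  set G : ℝ → H := fun t => ∑ i, a i • K (φ t (x i)) with hG
  set G' : H := ∑ i, a i • DK (x i) (f (x i)) with hG'
  set g : H := ∑ i, a i • K (x i) with hg
  have hG0 : G 0 = g := by
    simp only [hG, hg]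
    exact Finset.sum_congr rfl fun i _ => by rw [hφ0 (x i) (hx i)]
  -- derivative of G at 0
  have hderiv : HasDerivAt G G' 0 := by
    apply HasDerivAt.fun_sum
    intro i _
    have h2 : HasFDerivAt K (DK (x i)) (φ 0 (x i)) := by
      rw [hφ0 (x i) (hx i)]; exact hC1 (x i) (hx i)
    have h3 := h2.comp_hasDerivAt 0 (hφode (x i) (hx i) 0 le_rfl)
    rw [hφ0 (x i) (hx i)] at h3
    exact (h3 : HasDerivAt (fun s => K (φ s (x i))) (DK (x i) (f (x i))) 0).const_smul (a i)
  -- derivative of F t = Re ⟪G t, G t⟫ at 0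
  have hinner : HasDerivAt (fun t => ⟪G t, G t⟫_ℂ)
      (⟪G 0, G'⟫_ℂ + ⟪G', G 0⟫_ℂ) 0 := hderiv.inner ℂ hderiv
  have hF : HasDerivAt (fun t => (⟪G t, G t⟫_ℂ).re)
      ((⟪G 0, G'⟫_ℂ + ⟪G', G 0⟫_ℂ).re) 0 :=
    Complex.reCLM.hasFDerivAt.comp_hasDerivAt 0 hinner
  have hFD : (⟪G 0, G'⟫_ℂ + ⟪G', G 0⟫_ℂ).re = 2 * (⟪g, G'⟫_ℂ).re := by
    have h : (⟪G', g⟫_ℂ).re = (⟪g, G'⟫_ℂ).re := by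
      rw [← inner_conj_symm G' g, Complex.conj_re]
    rw [hG0, Complex.add_re, h]; ring
  -- the bound: for t ≥ 0, ‖G t‖ ≤ exp(ω t) ‖g‖
  have hbound : ∀ t > (0:ℝ), (⟪G t, G t⟫_ℂ).re ≤ Real.exp (ω * t) ^ 2 * (⟪g, g⟫_ℂ).re := by
    intro t ht
    have hGt : G t = Kt t g := by
      rw [hg, map_sum]
      exact Finset.sum_congr rfl fun i _ => by
        rw [map_smul, hKt t ht.le (x i) (hx i)]
    have hn : ‖G t‖ ≤ Real.exp (ω * t) * ‖g‖ := by
      rw [hGt]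
      calc ‖Kt t g‖ ≤ ‖Kt t‖ * ‖g‖ := (Kt t).le_opNorm g
        _ ≤ Real.exp (ω * t) * ‖g‖ :=
          mul_le_mul_of_nonneg_right (hKtbound t ht.le) (norm_nonneg g)
    have h1 : (⟪G t, G t⟫_ℂ).re = ‖G t‖ ^ 2 := by
      simpa using @inner_self_eq_norm_sq ℂ H _ _ _ (G t)
    have h2 : (⟪g, g⟫_ℂ).re = ‖g‖ ^ 2 := by
      simpa using @inner_self_eq_norm_sq ℂ H _ _ _ g
    rw [h1, h2]
    calc ‖G t‖ ^ 2 ≤ (Real.exp (ω * t) * ‖g‖) ^ 2 := by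
          apply sq_le_sq' _ hn
          nlinarith [norm_nonneg (G t), norm_nonneg g, Real.exp_pos (ω * t)]
      _ = Real.exp (ω * t) ^ 2 * ‖g‖ ^ 2 := by ring
  -- consider h t = exp(ωt)^2 * Re⟪g,g⟫ - Re⟪G t, G t⟫
  have hexp : HasDerivAt (fun t : ℝ => Real.exp (ω * t) ^ 2 * (⟪g, g⟫_ℂ).re)
      (2 * ω * (⟪g, g⟫_ℂ).re) 0 := by
    have h1 : HasDerivAt (fun t : ℝ => Real.exp (2 * ω * t)) (2 * ω) 0 := by
      have := (hasDerivAt_id (0:ℝ)).const_mul (2 * ω)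
      simpa using this.exp
    have heq : (fun t : ℝ => Real.exp (ω * t) ^ 2 * (⟪g, g⟫_ℂ).re)
        = fun t : ℝ => Real.exp (2 * ω * t) * (⟪g, g⟫_ℂ).re := by
      funext t
      rw [← Real.exp_nat_mul]
      ring_nf
    rw [heq]
    simpa using h1.mul_const ((⟪g, g⟫_ℂ).re)
  have key : 0 ≤ 2 * ω * (⟪g, g⟫_ℂ).re - 2 * (⟪g, G'⟫_ℂ).re := by
    apply aux_deriv_nonneg (h := fun t => Real.exp (ω * t) ^ 2 * (⟪g, g⟫_ℂ).re
      - (⟪G t, G t⟫_ℂ).re)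
    · rw [← hFD]
      exact hexp.sub hF
    · simp [hG0]
    · intro t ht
      have := hbound t ht
      linarith
  have key2 : (⟪g, G'⟫_ℂ).re ≤ ω * (⟪g, g⟫_ℂ).re := by linarith
  -- identify the sums with the inner products
  have hDKexp : ∀ i, DK (x i) (f (x i))
      = ∑ l, f (x i) l • DK (x i) (EuclideanSpace.single l 1) := by
    intro i
    conv_lhs => rw [aux_single_decomp (f (x i))]
    rw [map_sum]
    exact Finset.sum_congr rfl fun l _ => (DK (x i)).map_smul _ _
  have hinner_exp : ∀ i j, ⟪K (x j), DK (x i) (f (x i))⟫_ℂ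
      = ∑ l : Fin n, ((f (x i) l : ℝ) : ℂ) *
          ⟪K (x j), DK (x i) (EuclideanSpace.single l 1)⟫_ℂ := by
    intro i j
    rw [hDKexp i, inner_sum]
    refine Finset.sum_congr rfl fun l _ => ?_
    rw [RCLike.real_smul_eq_coe_smul (K := ℂ), inner_smul_right]
    norm_cast
  have hid1 : (∑ i, ∑ j, a i * conj (a j) *
      ∑ l : Fin n, ((f (x i) l : ℝ) : ℂ) *
        ⟪K (x j), DK (x i) (EuclideanSpace.single l 1)⟫_ℂ) = ⟪g, G'⟫_ℂ := by
    calc (∑ i, ∑ j, a i * conj (a j) *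
        ∑ l : Fin n, ((f (x i) l : ℝ) : ℂ) *
          ⟪K (x j), DK (x i) (EuclideanSpace.single l 1)⟫_ℂ)
        = ∑ i, ∑ j, ⟪a j • K (x j), a i • DK (x i) (f (x i))⟫_ℂ := by
          refine Finset.sum_congr rfl fun i _ => Finset.sum_congr rfl fun j _ => ?_
          rw [inner_smul_left, inner_smul_right, hinner_exp i j]
          ring
      _ = ∑ j, ∑ i, ⟪a j • K (x j), a i • DK (x i) (f (x i))⟫_ℂ := Finset.sum_comm
      _ = ⟪g, G'⟫_ℂ := by
          rw [hg, hG', sum_inner]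
          exact Finset.sum_congr rfl fun j _ => (inner_sum _ _ _).symm
  have hid2 : (∑ i, ∑ j, a i * conj (a j) * ⟪K (x j), K (x i)⟫_ℂ) = ⟪g, g⟫_ℂ := by
    rw [hg, sum_inner, Finset.sum_comm]
    refine Finset.sum_congr rfl fun j _ => ?_
    rw [inner_sum]
    refine Finset.sum_congr rfl fun i _ => ?_
    rw [inner_smul_left, inner_smul_right]
    ring
  rw [hid1, hid2]
  exact key2
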